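/- Fix integers a, b ≥ 1 and let M₁₁, M₁₂, M₂₁, M₂₂ ∈ ℤ[q] be the rank-matrix entries of the box poset Fin a × Fin b defined combinatorially below. Then the polynomial M₁₁·M₂₂ − M₁₂·M₂₁ (the determinant of the rank matrix of B_{a×b}) is (2ab)-palindromic: its natDegree is at most 2ab and its coefficient of q^j equals its coefficient of q^{2ab−j} for all 0 ≤ j ≤ 2ab. -/

import Mathlib

open Polynomial

/-- A polynomial `p ∈ ℤ[q]` is `N`-palindromic if `natDegree p ≤ N` and
`coeff j = coeff (N - j)` for all `0 ≤ j ≤ N`. -/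
def IsPalindromic (p : Polynomial ℤ) (d : ℕ) : Prop :=
  p.natDegree ≤ d ∧ ∀ j ≤ d, p.coeff j = p.coeff (d - j)

/-- The lower sets of the box poset `Fin a × Fin b` with the componentwise order. -/
def boxLowerSets (a b : ℕ) : Finset (Finset (Fin a × Fin b)) :=
  Finset.univ.filter (fun I =>
    ∀ p ∈ I, ∀ p' : Fin a × Fin b, p'.1 ≤ p.1 → p'.2 ≤ p.2 → p' ∈ I)

/-- Partial rank polynomial of the box poset: `∑ q^|I|` over lower sets `I`
satisfying the constraint `P`. -/
noncomputable def boxEntry (a b : ℕ) (P : Finset (Fin a × Fin b) → Prop)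
    [DecidablePred P] : Polynomial ℤ :=
  ∑ I ∈ (boxLowerSets a b).filter P, X ^ I.card

section Aux

variable {a b : ℕ}

/-- order-reversing bijection on the box -/
def boxRev (a b : ℕ) : (Fin a × Fin b) ≃ (Fin a × Fin b) :=
  Equiv.prodCongr Fin.revPerm Fin.revPerm

/-- complement-flip involution on subsets -/
def boxFlip (I : Finset (Fin a × Fin b)) : Finset (Fin a × Fin b) :=
  Iᶜ.map (boxRev a b).toEmbedding

lemma mem_boxFlip {I : Finset (Fin a × Fin b)} {x : Fin a × Fin b} :
    x ∈ boxFlip I ↔ boxRev a b x ∉ I := by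
  have hsymm : (boxRev a b).symm = boxRev a b := by
    ext y : 1 <;> simp [boxRev]
  simp [boxFlip, Finset.mem_map_equiv, hsymm]

lemma boxFlip_boxFlip (I : Finset (Fin a × Fin b)) : boxFlip (boxFlip I) = I := by
  ext x
  rw [mem_boxFlip, mem_boxFlip, not_not]
  have : boxRev a b (boxRev a b x) = x := by
    cases x; simp [boxRev]
  rw [this]

lemma card_boxFlip (I : Finset (Fin a × Fin b)) : (boxFlip I).card = a * b - I.card := by
  simp [boxFlip, Finset.card_compl]

lemma box_card_le (I : Finset (Fin a × Fin b)) : I.card ≤ a * b := by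
  simpa using Finset.card_le_card (Finset.subset_univ I)

lemma boxFlip_mem_lower {I : Finset (Fin a × Fin b)} (h : I ∈ boxLowerSets a b) :
    boxFlip I ∈ boxLowerSets a b := by
  simp only [boxLowerSets, Finset.mem_filter, Finset.mem_univ, true_and] at h ⊢
  intro p hp p' h1 h2
  rw [mem_boxFlip] at hp ⊢
  intro hmem
  exact hp (h _ hmem (boxRev a b p) (by simpa [boxRev] using h1) (by simpa [boxRev] using h2))

lemma boxEntry_congr (P Q : Finset (Fin a × Fin b) → Prop) [DecidablePred P] [DecidablePred Q]
    (h : ∀ I, P I ↔ Q I) : boxEntry a b P = boxEntry a b Q := by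
  unfold boxEntry
  congr 1
  ext I
  simp [h]

lemma natDegree_boxEntry_le (P : Finset (Fin a × Fin b) → Prop) [DecidablePred P] :
    (boxEntry a b P).natDegree ≤ a * b := by
  refine Polynomial.natDegree_sum_le_of_forall_le _ _ (fun I _ => ?_)
  simpa [Polynomial.natDegree_X_pow] using box_card_le I

lemma boxEntry_split (P Q : Finset (Fin a × Fin b) → Prop) [DecidablePred P] [DecidablePred Q] :
    boxEntry a b P
      = boxEntry a b (fun I => P I ∧ Q I) + boxEntry a b (fun I => P I ∧ ¬ Q I) := by
  unfold boxEntry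
  rw [← Finset.sum_filter_add_sum_filter_not ((boxLowerSets a b).filter P) Q]
  congr 1 <;> rw [Finset.filter_filter]

lemma reflect_boxEntry (P : Finset (Fin a × Fin b) → Prop) [DecidablePred P] :
    (boxEntry a b P).reflect (a * b) = boxEntry a b (fun I => P (boxFlip I)) := by
  classical
  unfold boxEntry
  have hsum : ∀ s : Finset (Finset (Fin a × Fin b)),
      Polynomial.reflect (a * b) (∑ I ∈ s, (X : Polynomial ℤ) ^ I.card)
        = ∑ I ∈ s, Polynomial.reflect (a * b) ((X : Polynomial ℤ) ^ I.card) := by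
    intro s
    induction s using Finset.induction with
    | empty => simp
    | insert _ _ hne ih =>
        rw [Finset.sum_insert hne, Finset.sum_insert hne, Polynomial.reflect_add, ih]
  rw [hsum]
  have hterm : ∀ I ∈ (boxLowerSets a b).filter P,
      Polynomial.reflect (a * b) ((X : Polynomial ℤ) ^ I.card)
        = (X : Polynomial ℤ) ^ (a * b - I.card) := by
    intro I _
    rw [Polynomial.reflect_monomial, Polynomial.revAt_le (box_card_le I)]
  rw [Finset.sum_congr rfl hterm]
  refine Finset.sum_nbij' (fun I => boxFlip I) (fun J => boxFlip J) ?_ ?_ ?_ ?_ ?_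
  · intro I hI
    simp only [Finset.mem_filter] at hI ⊢
    exact ⟨boxFlip_mem_lower hI.1, by rw [boxFlip_boxFlip]; exact hI.2⟩
  · intro J hJ
    simp only [Finset.mem_filter] at hJ ⊢
    exact ⟨boxFlip_mem_lower hJ.1, hJ.2⟩
  · intro I _; exact boxFlip_boxFlip I
  · intro J _; exact boxFlip_boxFlip J
  · intro I _
    simp [card_boxFlip]

end Aux

/-- the determinant `M₁₁·M₂₂ − M₁₂·M₂₁` of the rank matrix of the box poset
`B_{a×b}` is `(2ab)`-palindromic. -/
theorem box_det_palindromic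
    (a b : ℕ) (ha : 1 ≤ a) (hb : 1 ≤ b)
    (xL xR : Fin a × Fin b)
    (hxL : xL = (⟨a - 1, by omega⟩, ⟨0, by omega⟩))
    (hxR : xR = (⟨0, by omega⟩, ⟨b - 1, by omega⟩)) :
    IsPalindromic
      (boxEntry a b (fun I => xR ∈ I) * boxEntry a b (fun I => xR ∉ I ∧ xL ∉ I) -
       boxEntry a b (fun I => xR ∉ I) * boxEntry a b (fun I => xR ∈ I ∧ xL ∉ I))
      (2 * (a * b)) := by
  classical
  have hrevR : boxRev a b xR = xL := by
    subst hxL hxR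
    simp only [boxRev, Equiv.prodCongr_apply, Prod.map]
    refine Prod.ext ?_ ?_ <;> · apply Fin.ext; simp [Fin.rev]; try omega
  have hrevL : boxRev a b xL = xR := by
    subst hxL hxR
    simp only [boxRev, Equiv.prodCongr_apply, Prod.map]
    refine Prod.ext ?_ ?_ <;> · apply Fin.ext; simp [Fin.rev]; try omega
  -- splitting identities
  have e1 : boxEntry a b (fun _ => True)
      = boxEntry a b (fun I => xR ∈ I) + boxEntry a b (fun I => xR ∉ I) := by
    have h := boxEntry_split (a := a) (b := b) (fun _ => True) (fun I => xR ∈ I)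
    rw [boxEntry_congr (fun I => True ∧ xR ∈ I) (fun I => xR ∈ I) (fun I => by tauto),
      boxEntry_congr (fun I => True ∧ ¬ xR ∈ I) (fun I => xR ∉ I) (fun I => by tauto)] at h
    exact h
  have e2 : boxEntry a b (fun I => xR ∈ I)
      = boxEntry a b (fun I => xR ∈ I ∧ xL ∈ I) + boxEntry a b (fun I => xR ∈ I ∧ xL ∉ I) := by
    rw [boxEntry_split (fun I => xR ∈ I) (fun I => xL ∈ I)]
  have e3 : boxEntry a b (fun I => xR ∉ I)
      = boxEntry a b (fun I => xR ∉ I ∧ xL ∈ I) + boxEntry a b (fun I => xR ∉ I ∧ xL ∉ I) := by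
    rw [boxEntry_split (fun I => xR ∉ I) (fun I => xL ∈ I)]
  have e4 : boxEntry a b (fun I => xL ∈ I)
      = boxEntry a b (fun I => xR ∈ I ∧ xL ∈ I) + boxEntry a b (fun I => xR ∉ I ∧ xL ∈ I) := by
    have h := boxEntry_split (a := a) (b := b) (fun I => xL ∈ I) (fun I => xR ∈ I)
    rw [boxEntry_congr (fun I => xL ∈ I ∧ xR ∈ I) (fun I => xR ∈ I ∧ xL ∈ I) (fun I => by tauto),
      boxEntry_congr (fun I => xL ∈ I ∧ ¬ xR ∈ I) (fun I => xR ∉ I ∧ xL ∈ I) (fun I => by tauto)] at h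
    exact h
  have e5 : boxEntry a b (fun _ => True)
      = boxEntry a b (fun I => xL ∈ I) + boxEntry a b (fun I => xL ∉ I) := by
    have h := boxEntry_split (a := a) (b := b) (fun _ => True) (fun I => xL ∈ I)
    rw [boxEntry_congr (fun I => True ∧ xL ∈ I) (fun I => xL ∈ I) (fun I => by tauto),
      boxEntry_congr (fun I => True ∧ ¬ xL ∈ I) (fun I => xL ∉ I) (fun I => by tauto)] at h
    exact h
  have eA : boxEntry a b (fun I => xL ∉ I)
      = boxEntry a b (fun I => xR ∈ I) + boxEntry a b (fun I => xR ∉ I)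
        - boxEntry a b (fun I => xL ∈ I) := by
    rw [← e1, e5]; ring
  -- reflection identities
  have r11 : (boxEntry a b (fun I => xR ∈ I)).reflect (a * b)
      = boxEntry a b (fun I => xL ∉ I) := by
    rw [reflect_boxEntry]
    exact boxEntry_congr _ _ (fun I => by rw [mem_boxFlip, hrevR])
  have r22 : (boxEntry a b (fun I => xR ∉ I ∧ xL ∉ I)).reflect (a * b)
      = boxEntry a b (fun I => xR ∈ I ∧ xL ∈ I) := by
    rw [reflect_boxEntry]
    refine boxEntry_congr _ _ (fun I => ?_)
    rw [mem_boxFlip, mem_boxFlip, hrevR, hrevL, not_not, not_not]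
    tauto
  have r12 : (boxEntry a b (fun I => xR ∉ I)).reflect (a * b)
      = boxEntry a b (fun I => xL ∈ I) := by
    rw [reflect_boxEntry]
    refine boxEntry_congr _ _ (fun I => ?_)
    rw [mem_boxFlip, hrevR, not_not]
  have r21 : (boxEntry a b (fun I => xR ∈ I ∧ xL ∉ I)).reflect (a * b)
      = boxEntry a b (fun I => xR ∈ I ∧ xL ∉ I) := by
    rw [reflect_boxEntry]
    refine boxEntry_congr _ _ (fun I => ?_)
    rw [mem_boxFlip, mem_boxFlip, hrevR, hrevL, not_not]
    tauto
  have hdeg : (boxEntry a b (fun I => xR ∈ I) * boxEntry a b (fun I => xR ∉ I ∧ xL ∉ I) -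
       boxEntry a b (fun I => xR ∉ I) * boxEntry a b (fun I => xR ∈ I ∧ xL ∉ I)).natDegree
        ≤ 2 * (a * b) := by
    refine le_trans (Polynomial.natDegree_sub_le _ _) (max_le ?_ ?_) <;>
    · refine le_trans Polynomial.natDegree_mul_le ?_
      refine le_trans (add_le_add (natDegree_boxEntry_le _) (natDegree_boxEntry_le _)) ?_
      omega
  have hrefl : (boxEntry a b (fun I => xR ∈ I) * boxEntry a b (fun I => xR ∉ I ∧ xL ∉ I) -
       boxEntry a b (fun I => xR ∉ I) * boxEntry a b (fun I => xR ∈ I ∧ xL ∉ I)).reflect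
        (2 * (a * b))
      = boxEntry a b (fun I => xR ∈ I) * boxEntry a b (fun I => xR ∉ I ∧ xL ∉ I) -
       boxEntry a b (fun I => xR ∉ I) * boxEntry a b (fun I => xR ∈ I ∧ xL ∉ I) := by
    rw [Polynomial.reflect_sub, show 2 * (a * b) = a * b + a * b by ring,
      Polynomial.reflect_mul _ _ (natDegree_boxEntry_le _) (natDegree_boxEntry_le _),
      Polynomial.reflect_mul _ _ (natDegree_boxEntry_le _) (natDegree_boxEntry_le _),
      r11, r22, r12, r21, eA, e4, e2, e3]
    ring
  refine ⟨hdeg, fun j hj => ?_⟩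
  have hc := Polynomial.coeff_reflect (2 * (a * b))
    (boxEntry a b (fun I => xR ∈ I) * boxEntry a b (fun I => xR ∉ I ∧ xL ∉ I) -
       boxEntry a b (fun I => xR ∉ I) * boxEntry a b (fun I => xR ∈ I ∧ xL ∉ I)) j
  rw [hrefl, Polynomial.revAt_le hj] at hc
  exact hc
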